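/- (Convex order between Beta laws.) Let X and X' be random variables following Beta laws of parameters (a, b) and (a', b') respectively, with a, b, a', b' > 0. If a < a', b < b' and a/(a + b) = a'/(a' + b'), then for every convex function φ : [0,1] → ℝ one has E[φ(X')] ≤ E[φ(X)]. -/

import Mathlib

open MeasureTheory intervalIntegral

set_option maxHeartbeats 2000000


lemma betaFn_eqOn (a b : ℝ) : Set.EqOn (fun x : ℝ => ((x ^ (a-1) * (1-x) ^ (b-1) : ℝ) : ℂ))
    (fun x : ℝ => (x:ℂ) ^ ((a:ℂ)-1) * (1-(x:ℂ)) ^ ((b:ℂ)-1)) (Set.Icc 0 1) := by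
  intro x hx
  obtain ⟨h0, h1⟩ := hx
  simp only [Complex.ofReal_mul]
  rw [Complex.ofReal_cpow h0, Complex.ofReal_cpow (by linarith : (0:ℝ) ≤ 1 - x)]
  push_cast
  ring_nf

lemma betaInt_integrable {a b : ℝ} (ha : 0 < a) (hb : 0 < b) :
    IntervalIntegrable (fun x : ℝ => x ^ (a-1) * (1-x) ^ (b-1)) volume 0 1 := by
  have hc := Complex.betaIntegral_convergent (u := a) (v := b) (by simpa using ha) (by simpa using hb)
  have heq := betaFn_eqOn a b
  rw [intervalIntegrable_iff_integrableOn_Ioc_of_le (by norm_num)] at hc ⊢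
  have : IntegrableOn (fun x : ℝ => ((x ^ (a-1) * (1-x) ^ (b-1) : ℝ) : ℂ)) (Set.Ioc 0 1) volume :=
    hc.congr_fun (fun x hx => (heq (Set.Ioc_subset_Icc_self hx)).symm) measurableSet_Ioc
  have h2 : IntegrableOn (fun x : ℝ => x^(a-1)*(1-x)^(b-1)) (Set.Ioc 0 1) volume := by
    refine IntegrableOn.congr_fun this.re (fun x hx => ?_) measurableSet_Ioc
    simp
  exact h2

lemma betaInt_eq (a b : ℝ) :
    ((∫ x in (0:ℝ)..1, x ^ (a-1) * (1-x) ^ (b-1) : ℝ) : ℂ) = Complex.betaIntegral a b := by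
  rw [← intervalIntegral.integral_ofReal]
  exact intervalIntegral.integral_congr (by rw [Set.uIcc_of_le (by norm_num : (0:ℝ) ≤ 1)]; exact betaFn_eqOn a b)

lemma betaInt_pos {a b : ℝ} (ha : 0 < a) (hb : 0 < b) :
    0 < ∫ x in (0:ℝ)..1, x ^ (a-1) * (1-x) ^ (b-1) := by
  refine intervalIntegral_pos_of_pos_on (betaInt_integrable ha hb) (fun x hx => ?_) (by norm_num)
  have h1 : 0 < x := hx.1
  have h2 : 0 < 1 - x := by linarith [hx.2]
  positivity

lemma ii_Ioo (f : ℝ → ℝ) : (∫ x in (0:ℝ)..1, f x) = ∫ x in Set.Ioo (0:ℝ) 1, f x := by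
  rw [intervalIntegral.integral_of_le (by norm_num), integral_Ioc_eq_integral_Ioo]

lemma betaInt_ioo_integrable {a b : ℝ} (ha : 0 < a) (hb : 0 < b) :
    IntegrableOn (fun x : ℝ => x ^ (a-1) * (1-x) ^ (b-1)) (Set.Ioo 0 1) volume :=
  (((intervalIntegrable_iff_integrableOn_Ioc_of_le (by norm_num)).mp
    (betaInt_integrable ha hb))).mono_set Set.Ioo_subset_Ioc_self

lemma betaInt_sum {a b : ℝ} (ha : 0 < a) (hb : 0 < b) :
    (∫ x in (0:ℝ)..1, x ^ (a-1) * (1-x) ^ (b+1-1))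
      + (∫ x in (0:ℝ)..1, x ^ (a+1-1) * (1-x) ^ (b-1))
    = ∫ x in (0:ℝ)..1, x ^ (a-1) * (1-x) ^ (b-1) := by
  rw [ii_Ioo, ii_Ioo, ii_Ioo,
    ← integral_add (betaInt_ioo_integrable ha (by linarith)) (betaInt_ioo_integrable (by linarith) hb)]
  refine setIntegral_congr_fun measurableSet_Ioo (fun x hx => ?_)
  have h1 : 0 < x := hx.1
  have h2 : 0 < 1 - x := by linarith [hx.2]
  have e1 : (1-x) ^ (b+1-1) = (1-x) ^ (b-1) * (1-x) := by
    rw [show b+1-1 = (b-1)+1 by ring, Real.rpow_add h2, Real.rpow_one]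
  have e2 : x ^ (a+1-1) = x ^ (a-1) * x := by
    rw [show a+1-1 = (a-1)+1 by ring, Real.rpow_add h1, Real.rpow_one]
  rw [e1, e2]; ring

lemma betaInt_rec {a b : ℝ} (ha : 0 < a) (hb : 0 < b) :
    (∫ x in (0:ℝ)..1, x ^ (a+1-1) * (1-x) ^ (b-1))
      = a/(a+b) * ∫ x in (0:ℝ)..1, x ^ (a-1) * (1-x) ^ (b-1) := by
  have hrec := Complex.betaIntegral_recurrence (u := a) (v := b) (by simpa using ha) (by simpa using hb)
  have h1 : (a : ℂ) * ((∫ x in (0:ℝ)..1, x ^ (a-1) * (1-x) ^ (b+1-1) : ℝ) : ℂ)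
      = (b : ℂ) * ((∫ x in (0:ℝ)..1, x ^ (a+1-1) * (1-x) ^ (b-1) : ℝ) : ℂ) := by
    rw [betaInt_eq a (b+1), betaInt_eq (a+1) b]
    push_cast
    convert hrec using 3 <;> push_cast <;> ring
  have h2 : a * (∫ x in (0:ℝ)..1, x ^ (a-1) * (1-x) ^ (b+1-1))
      = b * (∫ x in (0:ℝ)..1, x ^ (a+1-1) * (1-x) ^ (b-1)) := by exact_mod_cast h1
  have hs := betaInt_sum ha hb
  have hab : a + b ≠ 0 := by positivity
  rw [div_mul_eq_mul_div, eq_div_iff hab]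
  nlinarith [hs, h2]

lemma betaInt_moment {a b : ℝ} (ha : 0 < a) (hb : 0 < b) :
    (∫ x in (0:ℝ)..1, x * (x ^ (a-1) * (1-x) ^ (b-1)))
      = a/(a+b) * ∫ x in (0:ℝ)..1, x ^ (a-1) * (1-x) ^ (b-1) := by
  rw [← betaInt_rec ha hb, ii_Ioo, ii_Ioo]
  refine setIntegral_congr_fun measurableSet_Ioo (fun x hx => ?_)
  have h1 : 0 < x := hx.1
  rw [show a+1-1 = (a-1)+1 by ring, Real.rpow_add h1, Real.rpow_one]
  ring

lemma convexOn_Icc_bdd {φ : ℝ → ℝ} (hφ : ConvexOn ℝ (Set.Icc 0 1) φ) :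
    ∃ C : ℝ, 0 ≤ C ∧ ∀ x ∈ Set.Icc (0:ℝ) 1, |φ x| ≤ C := by
  obtain ⟨B, hB⟩ : ∃ B:ℝ, B = |φ 0| + |φ (1/2)| + |φ 1| := ⟨_, rfl⟩
  have hB0 : 0 ≤ B := by rw [hB]; positivity
  have h0m : (0:ℝ) ∈ Set.Icc (0:ℝ) 1 := by norm_num
  have h1m : (1:ℝ) ∈ Set.Icc (0:ℝ) 1 := by norm_num
  refine ⟨2*B, by linarith, ?_⟩
  intro x hx
  obtain ⟨h0, h1⟩ := hx
  rw [abs_le]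
  constructor
  · rcases le_or_gt x (1/2) with hhalf | hhalf
    · have h1x : 0 < 1 - x := by linarith
      obtain ⟨u, hu⟩ : ∃ u:ℝ, u = 1/(2*(1-x)) := ⟨_, rfl⟩
      have hu0 : 0 ≤ u := by rw [hu]; positivity
      have hu1 : u ≤ 1 := by rw [hu, div_le_one (by linarith)]; linarith
      have huh : 1/2 ≤ u := by rw [hu, le_div_iff₀ (by linarith)]; nlinarith
      have key := hφ.2 ⟨h0, h1⟩ h1m hu0 (by linarith : (0:ℝ) ≤ 1 - u) (by ring)
      simp only [smul_eq_mul] at key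
      have hmid : u * x + (1-u) * 1 = 1/2 := by rw [hu]; field_simp; ring
      rw [hmid] at key
      rcases le_or_gt 0 (φ x) with hs | hs
      · linarith
      · have e1 : u * φ x ≤ (1/2) * φ x := by nlinarith
        have e2 : (1-u) * φ 1 ≤ |φ 1| := by
          nlinarith [le_abs_self (φ 1), abs_nonneg (φ 1)]
        have := neg_abs_le (φ (1/2))
        have := abs_nonneg (φ 0)
        linarith
    · have hx0 : 0 < x := by linarith
      obtain ⟨v, hv⟩ : ∃ v:ℝ, v = 1/(2*x) := ⟨_, rfl⟩
      have hv0 : 0 ≤ v := by rw [hv]; positivity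
      have hv1 : v ≤ 1 := by rw [hv, div_le_one (by linarith)]; linarith
      have hvh : 1/2 ≤ v := by rw [hv, le_div_iff₀ (by linarith)]; nlinarith
      have key := hφ.2 h0m ⟨h0, h1⟩ (by linarith : (0:ℝ) ≤ 1 - v) hv0 (by ring)
      simp only [smul_eq_mul] at key
      have hmid : (1-v) * 0 + v * x = 1/2 := by rw [hv]; field_simp; ring
      rw [hmid] at key
      rcases le_or_gt 0 (φ x) with hs | hs
      · linarith
      · have e1 : v * φ x ≤ (1/2) * φ x := by nlinarith
        have e2 : (1-v) * φ 0 ≤ |φ 0| := by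
          nlinarith [le_abs_self (φ 0), abs_nonneg (φ 0)]
        have := neg_abs_le (φ (1/2))
        have := abs_nonneg (φ 1)
        linarith
  · have key := hφ.2 h0m h1m (by linarith : (0:ℝ) ≤ 1 - x) (by linarith : (0:ℝ) ≤ x) (by ring)
    simp only [smul_eq_mul] at key
    have hmid : (1-x) * 0 + x * 1 = x := by ring
    rw [hmid] at key
    have e1 : (1-x) * φ 0 ≤ |φ 0| := by nlinarith [le_abs_self (φ 0), abs_nonneg (φ 0)]
    have e2 : x * φ 1 ≤ |φ 1| := by nlinarith [le_abs_self (φ 1), abs_nonneg (φ 1)]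
    have := abs_nonneg (φ (1/2))
    linarith

lemma final_step (p s : ℝ) (φ h : ℝ → ℝ)
    (ih : IntegrableOn h (Set.Ioo 0 1) volume)
    (ixh : IntegrableOn (fun x => x * h x) (Set.Ioo 0 1) volume)
    (iφh : IntegrableOn (fun x => φ x * h x) (Set.Ioo 0 1) volume)
    (hH : ∫ x in Set.Ioo (0:ℝ) 1, h x = 0)
    (hXH : ∫ x in Set.Ioo (0:ℝ) 1, x * h x = 0)
    (hpt : ∀ x ∈ Set.Ioo (0:ℝ) 1, (φ x - (p + s * x)) * h x ≤ 0) :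
    ∫ x in Set.Ioo (0:ℝ) 1, φ x * h x ≤ 0 := by
  have i2 : IntegrableOn (fun x => p * h x + s * (x * h x)) (Set.Ioo 0 1) volume :=
    (ih.const_mul p).add (ixh.const_mul s)
  have e0 : ∫ x in Set.Ioo (0:ℝ) 1, (φ x * h x - (p * h x + s * (x * h x))) ≤ 0 := by
    apply integral_nonpos_of_ae
    rw [Filter.EventuallyLE, ae_restrict_iff' measurableSet_Ioo]
    filter_upwards with x hx
    simp only [Pi.zero_apply]
    nlinarith [hpt x hx]
  have e1 : ∫ x in Set.Ioo (0:ℝ) 1, (φ x * h x - (p * h x + s * (x * h x)))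
      = (∫ x in Set.Ioo (0:ℝ) 1, φ x * h x) - ∫ x in Set.Ioo (0:ℝ) 1, (p * h x + s * (x * h x)) :=
    integral_sub iφh i2
  have e2 : ∫ x in Set.Ioo (0:ℝ) 1, (p * h x + s * (x * h x))
      = p * (∫ x in Set.Ioo (0:ℝ) 1, h x) + s * ∫ x in Set.Ioo (0:ℝ) 1, x * h x := by
    rw [integral_add (ih.const_mul p) (ixh.const_mul s), MeasureTheory.integral_const_mul, MeasureTheory.integral_const_mul]
  rw [e1, e2, hH, hXH] at e0
  linarith

/-- Convex order between Beta laws: if `a < a'`, `b < b'` and the means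
`a/(a+b) = a'/(a'+b')` agree, then for every convex function `φ` on `[0,1]`,
`E[φ(X')] ≤ E[φ(X)]` where `X ∼ Beta(a,b)` and `X' ∼ Beta(a',b')`. -/
theorem stmt8 (a b a' b' : ℝ)
    (ha : 0 < a) (hb : 0 < b) (ha' : 0 < a') (hb' : 0 < b')
    (haa' : a < a') (hbb' : b < b')
    (hmean : a / (a + b) = a' / (a' + b'))
    (φ : ℝ → ℝ) (hφ : ConvexOn ℝ (Set.Icc 0 1) φ) :
    (∫ x in (0:ℝ)..1, φ x * (x ^ (a' - 1) * (1 - x) ^ (b' - 1)))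
        / (∫ x in (0:ℝ)..1, x ^ (a' - 1) * (1 - x) ^ (b' - 1))
      ≤ (∫ x in (0:ℝ)..1, φ x * (x ^ (a - 1) * (1 - x) ^ (b - 1)))
        / (∫ x in (0:ℝ)..1, x ^ (a - 1) * (1 - x) ^ (b - 1)) := by
  have hα : 0 < a' - a := by linarith
  have hβ : 0 < b' - b := by linarith
  obtain ⟨I, hIdef⟩ : ∃ I:ℝ, I = ∫ x in (0:ℝ)..1, x ^ (a - 1) * (1 - x) ^ (b - 1) := ⟨_, rfl⟩
  obtain ⟨I', hI'def⟩ : ∃ I':ℝ, I' = ∫ x in (0:ℝ)..1, x ^ (a' - 1) * (1 - x) ^ (b' - 1) := ⟨_, rfl⟩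
  have hI : 0 < I := hIdef ▸ betaInt_pos ha hb
  have hI' : 0 < I' := hI'def ▸ betaInt_pos ha' hb'
  obtain ⟨h, hhdef⟩ : ∃ h : ℝ → ℝ,
      h = fun x => x^(a'-1)*(1-x)^(b'-1)/I' - x^(a-1)*(1-x)^(b-1)/I := ⟨_, rfl⟩
  have if₀ : IntegrableOn (fun x : ℝ => x^(a-1)*(1-x)^(b-1)) (Set.Ioo 0 1) volume :=
    betaInt_ioo_integrable ha hb
  have if₁ : IntegrableOn (fun x : ℝ => x^(a'-1)*(1-x)^(b'-1)) (Set.Ioo 0 1) volume :=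
    betaInt_ioo_integrable ha' hb'
  have ih : IntegrableOn h (Set.Ioo 0 1) volume := by
    rw [hhdef]; exact (if₁.div_const I').sub (if₀.div_const I)
  have hIoo : (∫ x in Set.Ioo (0:ℝ) 1, x^(a-1)*(1-x)^(b-1)) = I := by rw [hIdef, ii_Ioo]
  have hIoo' : (∫ x in Set.Ioo (0:ℝ) 1, x^(a'-1)*(1-x)^(b'-1)) = I' := by rw [hI'def, ii_Ioo]
  have hH : ∫ x in Set.Ioo (0:ℝ) 1, h x = 0 := by
    rw [hhdef]
    rw [integral_sub (if₁.div_const I') (if₀.div_const I), MeasureTheory.integral_div, MeasureTheory.integral_div,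
      hIoo, hIoo']
    field_simp
    ring
  have imx : IntegrableOn (fun x : ℝ => x * (x^(a-1)*(1-x)^(b-1))) (Set.Ioo 0 1) volume := by
    refine (betaInt_ioo_integrable (by linarith : (0:ℝ) < a+1) hb).congr_fun
      (fun x hx => ?_) measurableSet_Ioo
    beta_reduce; rw [show a+1-1 = (a-1)+1 by ring, Real.rpow_add hx.1, Real.rpow_one]; ring
  have imx' : IntegrableOn (fun x : ℝ => x * (x^(a'-1)*(1-x)^(b'-1))) (Set.Ioo 0 1) volume := by
    refine (betaInt_ioo_integrable (by linarith : (0:ℝ) < a'+1) hb').congr_fun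
      (fun x hx => ?_) measurableSet_Ioo
    beta_reduce; rw [show a'+1-1 = (a'-1)+1 by ring, Real.rpow_add hx.1, Real.rpow_one]; ring
  have hMx : ∫ x in Set.Ioo (0:ℝ) 1, x * (x^(a-1)*(1-x)^(b-1)) = a/(a+b) * I := by
    rw [← ii_Ioo, betaInt_moment ha hb, hIdef]
  have hMx' : ∫ x in Set.Ioo (0:ℝ) 1, x * (x^(a'-1)*(1-x)^(b'-1)) = a'/(a'+b') * I' := by
    rw [← ii_Ioo, betaInt_moment ha' hb', hI'def]
  have ixh : IntegrableOn (fun x => x * h x) (Set.Ioo 0 1) volume := by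
    rw [hhdef]
    have e : (fun x : ℝ => x * (x^(a'-1)*(1-x)^(b'-1)/I' - x^(a-1)*(1-x)^(b-1)/I))
        = fun x => (x * (x^(a'-1)*(1-x)^(b'-1)))/I' - (x * (x^(a-1)*(1-x)^(b-1)))/I := by
      ext x; ring
    rw [e]; exact (imx'.div_const _).sub (imx.div_const _)
  have hXH : ∫ x in Set.Ioo (0:ℝ) 1, x * h x = 0 := by
    rw [hhdef]
    have e : (fun x : ℝ => x * (x^(a'-1)*(1-x)^(b'-1)/I' - x^(a-1)*(1-x)^(b-1)/I))
        = fun x => (x * (x^(a'-1)*(1-x)^(b'-1)))/I' - (x * (x^(a-1)*(1-x)^(b-1)))/I := by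
      ext x; ring
    rw [e, integral_sub (imx'.div_const _) (imx.div_const _), MeasureTheory.integral_div, MeasureTheory.integral_div,
      hMx, hMx', mul_div_assoc, mul_div_assoc, div_self hI.ne', div_self hI'.ne']
    rw [mul_one, mul_one, hmean, sub_self]
  obtain ⟨C, hC0, hC⟩ := convexOn_Icc_bdd hφ
  have hφcont : ContinuousOn φ (Set.Ioo 0 1) :=
    ConvexOn.continuousOn isOpen_Ioo (hφ.subset Set.Ioo_subset_Icc_self (convex_Ioo 0 1))
  have hφm : AEStronglyMeasurable φ (volume.restrict (Set.Ioo (0:ℝ) 1)) :=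
    hφcont.aestronglyMeasurable measurableSet_Ioo
  have hφbd : ∀ᵐ x ∂(volume.restrict (Set.Ioo (0:ℝ) 1)), ‖φ x‖ ≤ C := by
    rw [ae_restrict_iff' measurableSet_Ioo]
    filter_upwards with x hx
    exact hC x ⟨hx.1.le, hx.2.le⟩
  have iφh : IntegrableOn (fun x => φ x * h x) (Set.Ioo 0 1) volume :=
    Integrable.bdd_mul ih hφm hφbd
  have iφf : IntegrableOn (fun x => φ x * (x^(a-1)*(1-x)^(b-1))) (Set.Ioo 0 1) volume :=
    Integrable.bdd_mul if₀ hφm hφbd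
  have iφf' : IntegrableOn (fun x => φ x * (x^(a'-1)*(1-x)^(b'-1))) (Set.Ioo 0 1) volume :=
    Integrable.bdd_mul if₁ hφm hφbd
  -- the log-ratio function
  obtain ⟨ψ, hψdef⟩ : ∃ ψ : ℝ → ℝ,
      ψ = fun x => Real.log (I/I') + (a'-a)*Real.log x + (b'-b)*Real.log (1-x) := ⟨_, rfl⟩
  have hsign : ∀ x ∈ Set.Ioo (0:ℝ) 1,
      h x = (x^(a-1)*(1-x)^(b-1)/I) * (Real.exp (ψ x) - 1) := by
    intro x hx
    have hx0 : 0 < x := hx.1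
    have hx1 : 0 < 1 - x := by linarith [hx.2]
    have e1 : Real.exp (ψ x) = (I/I') * x^(a'-a) * (1-x)^(b'-b) := by
      rw [hψdef]
      simp only
      rw [mul_comm (a'-a) (Real.log x), mul_comm (b'-b) (Real.log (1-x))]
      rw [Real.exp_add, Real.exp_add, Real.exp_log (div_pos hI hI'),
        ← Real.rpow_def_of_pos hx0, ← Real.rpow_def_of_pos hx1]
    have e2 : x^(a'-1) = x^(a-1) * x^(a'-a) := by
      rw [← Real.rpow_add hx0]; congr 1; ring
    have e3 : (1-x)^(b'-1) = (1-x)^(b-1) * (1-x)^(b'-b) := by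
      rw [← Real.rpow_add hx1]; congr 1; ring
    rw [hhdef]
    simp only
    rw [e1, e2, e3]
    field_simp
  have hψd : ∀ x ∈ Set.Ioo (0:ℝ) 1, HasDerivAt ψ ((a'-a)/x - (b'-b)/(1-x)) x := by
    intro x hx
    have hx0 : 0 < x := hx.1
    have hx1 : 0 < 1 - x := by linarith [hx.2]
    have l1 : HasDerivAt Real.log x⁻¹ x := Real.hasDerivAt_log hx0.ne'
    have l2 : HasDerivAt (fun y : ℝ => 1 - y) (0 - 1) x :=
      (hasDerivAt_const x (1:ℝ)).sub (hasDerivAt_id x)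
    have l3 : HasDerivAt (fun y : ℝ => Real.log (1 - y)) ((1-x)⁻¹ * (0 - 1)) x :=
      (Real.hasDerivAt_log hx1.ne').comp x l2
    have l4 : HasDerivAt ψ (0 + (a'-a) * x⁻¹ + (b'-b) * ((1-x)⁻¹ * (0 - 1))) x := by
      rw [hψdef]
      exact ((hasDerivAt_const x (Real.log (I/I'))).add (l1.const_mul (a'-a))).add
        (l3.const_mul (b'-b))
    convert l4 using 1
    field_simp
    ring
  obtain ⟨m, hm⟩ : ∃ m:ℝ, m = (a'-a)/((a'-a)+(b'-b)) := ⟨_, rfl⟩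
  have hm0 : 0 < m := by rw [hm]; positivity
  have hm1 : m < 1 := by rw [hm, div_lt_one (by linarith)]; linarith
  have hmono : StrictMonoOn ψ (Set.Ioc 0 m) := by
    apply strictMonoOn_of_deriv_pos (convex_Ioc 0 m)
    · intro x hx
      exact ((hψd x ⟨hx.1, lt_of_le_of_lt hx.2 hm1⟩).continuousAt).continuousWithinAt
    · intro x hx
      rw [interior_Ioc] at hx
      have hx' : x ∈ Set.Ioo (0:ℝ) 1 := ⟨hx.1, hx.2.trans hm1⟩
      rw [(hψd x hx').deriv]
      have hx0 : 0 < x := hx.1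
      have hx1 : 0 < 1 - x := by linarith [hx'.2]
      have hmx : x * ((a'-a)+(b'-b)) < a'-a := by
        have := hx.2
        rw [hm, lt_div_iff₀ (by linarith)] at this
        linarith
      rw [div_sub_div _ _ hx0.ne' hx1.ne']
      apply div_pos ?_ (by positivity)
      nlinarith
  have hanti : StrictAntiOn ψ (Set.Ico m 1) := by
    apply strictAntiOn_of_deriv_neg (convex_Ico m 1)
    · intro x hx
      exact ((hψd x ⟨lt_of_lt_of_le hm0 hx.1, hx.2⟩).continuousAt).continuousWithinAt
    · intro x hx
      rw [interior_Ico] at hx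
      have hx' : x ∈ Set.Ioo (0:ℝ) 1 := ⟨lt_trans hm0 hx.1, hx.2⟩
      rw [(hψd x hx').deriv]
      have hx0 : 0 < x := hx'.1
      have hx1 : 0 < 1 - x := by linarith [hx'.2]
      have hmx : a'-a < x * ((a'-a)+(b'-b)) := by
        have := hx.1
        rw [hm, div_lt_iff₀ (by linarith)] at this
        linarith
      rw [div_sub_div _ _ hx0.ne' hx1.ne']
      apply div_neg_of_neg_of_pos ?_ (by positivity)
      nlinarith
  -- produce the affine minorant/majorant pair
  have key : ∃ p s : ℝ, ∀ x ∈ Set.Ioo (0:ℝ) 1, (φ x - (p + s * x)) * h x ≤ 0 := by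
    rcases le_or_gt (ψ m) 0 with hpm | hpm
    · refine ⟨-C, 0, fun x hx => ?_⟩
      have hψx : ψ x ≤ 0 := by
        rcases le_or_gt x m with hc1 | hc1
        · rcases eq_or_lt_of_le hc1 with rfl | hc1
          · exact hpm
          · exact le_of_lt (lt_of_lt_of_le
              (hmono ⟨hx.1, hc1.le⟩ ⟨hm0, le_refl m⟩ hc1) hpm)
        · exact le_of_lt (lt_of_lt_of_le
            (hanti ⟨le_refl m, hm1⟩ ⟨hc1.le, hx.2⟩ hc1) hpm)
      have hh0 : h x ≤ 0 := by
        rw [hsign x hx]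
        have hx0 : 0 < x := hx.1
        have hx1 : 0 < 1 - x := by linarith [hx.2]
        apply mul_nonpos_of_nonneg_of_nonpos (by positivity)
        rw [sub_nonpos]
        exact Real.exp_le_one_iff.mpr hψx
      have hge : 0 ≤ φ x - (-C + 0 * x) := by
        have := hC x ⟨hx.1.le, hx.2.le⟩
        rw [abs_le] at this
        linarith [this.1]
      exact mul_nonpos_of_nonneg_of_nonpos hge hh0
    · -- two crossing points
      obtain ⟨c0, hc0⟩ : ∃ c:ℝ, c = Real.log (I/I') := ⟨_, rfl⟩
      obtain ⟨x1, hx1def⟩ : ∃ x1:ℝ, x1 = min (m/2) (Real.exp ((-c0 - 1)/(a'-a))) := ⟨_, rfl⟩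
      have hx10 : 0 < x1 := by
        rw [hx1def]; exact lt_min (by linarith) (Real.exp_pos _)
      have hx1m : x1 < m := by
        rw [hx1def]; exact lt_of_le_of_lt (min_le_left _ _) (by linarith)
      have hψx1 : ψ x1 < 0 := by
        have l1 : Real.log x1 ≤ (-c0-1)/(a'-a) := by
          calc Real.log x1 ≤ Real.log (Real.exp ((-c0-1)/(a'-a))) :=
                Real.log_le_log hx10 (hx1def ▸ min_le_right _ _)
            _ = (-c0-1)/(a'-a) := Real.log_exp _
        have l3 : (a'-a) * Real.log x1 ≤ -c0 - 1 := by
          have := mul_le_mul_of_nonneg_left l1 hα.le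
          rwa [mul_div_cancel₀ _ hα.ne'] at this
        have l2 : (b'-b) * Real.log (1 - x1) ≤ 0 :=
          mul_nonpos_of_nonneg_of_nonpos hβ.le
            (Real.log_nonpos (by linarith [hx1m, hm1]) (by linarith))
        rw [hψdef]
        simp only [← hc0]
        linarith
      obtain ⟨t1, ht1mem, ht1⟩ :=
        intermediate_value_Icc hx1m.le
          (fun y hy => ((hψd y ⟨lt_of_lt_of_le hx10 hy.1,
            lt_of_le_of_lt hy.2 hm1⟩).continuousAt).continuousWithinAt)
          (⟨hψx1.le, hpm.le⟩ : (0:ℝ) ∈ Set.Icc (ψ x1) (ψ m))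
      have ht10 : 0 < t1 := lt_of_lt_of_le hx10 ht1mem.1
      have ht1m : t1 < m := lt_of_le_of_ne ht1mem.2 (fun e => by rw [← e, ht1] at hpm; exact lt_irrefl _ hpm)
      obtain ⟨z1, hz1def⟩ : ∃ z:ℝ, z = min ((1-m)/2) (Real.exp ((-c0 - 1)/(b'-b))) := ⟨_, rfl⟩
      have hz10 : 0 < z1 := by
        rw [hz1def]; exact lt_min (by linarith) (Real.exp_pos _)
      have hz1h : z1 ≤ (1-m)/2 := hz1def ▸ min_le_left _ _
      obtain ⟨y1, hy1def⟩ : ∃ y:ℝ, y = 1 - z1 := ⟨_, rfl⟩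
      have hy1m : m < y1 := by rw [hy1def]; linarith
      have hy11 : y1 < 1 := by rw [hy1def]; linarith
      have hψy1 : ψ y1 < 0 := by
        have h1y : 1 - y1 = z1 := by rw [hy1def]; ring
        have l1 : Real.log (1-y1) ≤ (-c0-1)/(b'-b) := by
          rw [h1y]
          calc Real.log z1 ≤ Real.log (Real.exp ((-c0-1)/(b'-b))) :=
                Real.log_le_log hz10 (hz1def ▸ min_le_right _ _)
            _ = (-c0-1)/(b'-b) := Real.log_exp _
        have l3 : (b'-b) * Real.log (1-y1) ≤ -c0 - 1 := by
          have := mul_le_mul_of_nonneg_left l1 hβ.le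
          rwa [mul_div_cancel₀ _ hβ.ne'] at this
        have l2 : (a'-a) * Real.log y1 ≤ 0 :=
          mul_nonpos_of_nonneg_of_nonpos hα.le
            (Real.log_nonpos (by linarith) (by linarith))
        rw [hψdef]
        simp only [← hc0]
        linarith
      obtain ⟨t2, ht2mem, ht2⟩ :=
        intermediate_value_Icc' hy1m.le
          (fun y hy => ((hψd y ⟨lt_of_lt_of_le hm0 hy.1,
            lt_of_le_of_lt hy.2 hy11⟩).continuousAt).continuousWithinAt)
          (⟨hψy1.le, hpm.le⟩ : (0:ℝ) ∈ Set.Icc (ψ y1) (ψ m))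
      have ht21 : t2 < 1 := lt_of_le_of_lt ht2mem.2 hy11
      have ht2m : m < t2 := lt_of_le_of_ne ht2mem.1
        (fun e => by rw [e, ht2] at hpm; exact lt_irrefl _ hpm)
      have ht12 : t1 < t2 := ht1m.trans ht2m
      have ht12' : (0:ℝ) < t2 - t1 := by linarith
      have ht1I : t1 ∈ Set.Icc (0:ℝ) 1 := ⟨ht10.le, (ht1m.trans hm1).le⟩
      have ht2I : t2 ∈ Set.Icc (0:ℝ) 1 := ⟨(hm0.trans ht2m).le, ht21.le⟩
      obtain ⟨sl, hsl⟩ : ∃ s:ℝ, s = (φ t2 - φ t1)/(t2 - t1) := ⟨_, rfl⟩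
      have hslkey : sl * (t2 - t1) = φ t2 - φ t1 := by
        rw [hsl]; field_simp
      refine ⟨φ t1 - sl * t1, sl, fun x hx => ?_⟩
      have hxI : x ∈ Set.Icc (0:ℝ) 1 := ⟨hx.1.le, hx.2.le⟩
      have hx0 : 0 < x := hx.1
      have hx1 : 0 < 1 - x := by linarith [hx.2]
      rcases lt_or_ge x t1 with hcase | hcase
      · -- to the left of t1
        have hψx : ψ x < 0 := by
          have := hmono ⟨hx0, (hcase.trans ht1m).le⟩ ⟨ht10, ht1m.le⟩ hcase
          rwa [ht1] at this
        have hh0 : h x ≤ 0 := by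
          rw [hsign x hx]
          apply mul_nonpos_of_nonneg_of_nonpos (by positivity)
          rw [sub_nonpos]
          exact Real.exp_le_one_iff.mpr hψx.le
        have hslm := hφ.slope_mono_adjacent hxI ht2I hcase ht12
        rw [← hsl] at hslm
        have hmul := (div_le_iff₀ (by linarith : (0:ℝ) < t1 - x)).mp hslm
        have hexp : sl * (t1 - x) = sl * t1 - sl * x := by ring
        have hge : 0 ≤ φ x - (φ t1 - sl * t1 + sl * x) := by linarith
        exact mul_nonpos_of_nonneg_of_nonpos hge hh0
      rcases le_or_gt x t2 with hcase2 | hcase2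
      · -- between t1 and t2
        have hψx : 0 ≤ ψ x := by
          rcases le_or_gt x m with hcm | hcm
          · have := hmono.monotoneOn ⟨ht10, ht1m.le⟩ ⟨hx0, hcm⟩ hcase
            rwa [ht1] at this
          · have := hanti.antitoneOn ⟨hcm.le, hx.2⟩ ⟨ht2m.le, ht21⟩ hcase2
            rwa [ht2] at this
        have hh0 : 0 ≤ h x := by
          rw [hsign x hx]
          apply mul_nonneg (by positivity)
          rw [sub_nonneg]
          exact Real.one_le_exp hψx
        obtain ⟨w, hw⟩ : ∃ w:ℝ, w = (x - t1)/(t2 - t1) := ⟨_, rfl⟩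
        have hw0 : 0 ≤ w := by rw [hw]; apply div_nonneg (by linarith) (by linarith)
        have hw1 : w ≤ 1 := by rw [hw, div_le_one ht12']; linarith
        have hcx : (1-w) * t1 + w * t2 = x := by
          rw [hw]; field_simp; ring
        have key2 := hφ.2 ht1I ht2I (by linarith : (0:ℝ) ≤ 1 - w) hw0 (by ring)
        simp only [smul_eq_mul] at key2
        rw [hcx] at key2
        have hline : (1-w) * φ t1 + w * φ t2 = (φ t1 - sl * t1) + sl * x := by
          rw [hw, hsl]; field_simp; ring
        have hle : φ x - (φ t1 - sl * t1 + sl * x) ≤ 0 := by linarith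
        exact mul_nonpos_of_nonpos_of_nonneg hle hh0
      · -- to the right of t2
        have hψx : ψ x < 0 := by
          have := hanti ⟨ht2m.le, ht21⟩ ⟨(ht2m.trans hcase2).le, hx.2⟩ hcase2
          rwa [ht2] at this
        have hh0 : h x ≤ 0 := by
          rw [hsign x hx]
          apply mul_nonpos_of_nonneg_of_nonpos (by positivity)
          rw [sub_nonpos]
          exact Real.exp_le_one_iff.mpr hψx.le
        have hslm := hφ.slope_mono_adjacent ht1I hxI ht12 hcase2
        rw [← hsl] at hslm
        have hmul := (le_div_iff₀ (by linarith : (0:ℝ) < x - t2)).mp hslm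
        have he1 : sl * (x - t2) = sl * x - sl * t2 := by ring
        have he2 : sl * (t2 - t1) = sl * t2 - sl * t1 := by ring
        have hge : 0 ≤ φ x - (φ t1 - sl * t1 + sl * x) := by linarith
        exact mul_nonpos_of_nonneg_of_nonpos hge hh0
  obtain ⟨p, s, hpt⟩ := key
  have main := final_step p s φ h ih ixh iφh hH hXH hpt
  have hsplit : ∫ x in Set.Ioo (0:ℝ) 1, φ x * h x
      = (∫ x in Set.Ioo (0:ℝ) 1, φ x * (x^(a'-1)*(1-x)^(b'-1)))/I'
        - (∫ x in Set.Ioo (0:ℝ) 1, φ x * (x^(a-1)*(1-x)^(b-1)))/I := by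
    rw [hhdef]
    have e : (fun x : ℝ => φ x * (x^(a'-1)*(1-x)^(b'-1)/I' - x^(a-1)*(1-x)^(b-1)/I))
        = fun x => (φ x * (x^(a'-1)*(1-x)^(b'-1)))/I' - (φ x * (x^(a-1)*(1-x)^(b-1)))/I := by
      ext x; ring
    rw [e, integral_sub (iφf'.div_const _) (iφf.div_const _), MeasureTheory.integral_div, MeasureTheory.integral_div]
  rw [hsplit] at main
  rw [ii_Ioo (fun x => φ x * (x^(a'-1)*(1-x)^(b'-1))),
    ii_Ioo (fun x => φ x * (x^(a-1)*(1-x)^(b-1))), ← hIdef, ← hI'def]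
  linarith
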